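/- arXiv:2409.12508 — 2 statements merged into one kernel-verified Lean document; each statement's English description precedes it below -/
import Mathlib

section
/- Let n ≥ 1, p > 0, and let K : (0,∞) → (0,∞) be continuous such that there exists R₀ > 1 with inf_{r∈(0,R)} K(r) = K(R) for all R > R₀. Let T > 1 satisfy 12 T^{1/2} > R₀, and set B_T = {(x,y,τ) ∈ ℝⁿ×ℝⁿ×ℝ : |x|² ≤ T, |y|² ≤ T, |τ| ≤ T}. Then for every measurable u : ℍⁿ → ℝ and every η ∈ B_T, (K ∗_ℍ |u|^p)(η) ≥ K(12 T^{1/2}) ∫_{B_T} |u(ξ)|^p dξ, where both sides are interpreted in [0,∞]. -/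
open MeasureTheory Filter Real Set
open scoped ENNReal

noncomputable section

/-- The Heisenberg group `ℍⁿ`, modelled as `ℝⁿ × ℝⁿ × ℝ` with Lebesgue measure. -/
abbrev Heis (n : ℕ) : Type := EuclideanSpace ℝ (Fin n) × EuclideanSpace ℝ (Fin n) × ℝ

/-- The Heisenberg group law `(x,y,τ)∘(x',y',τ') = (x+x', y+y', τ+τ'+2(x·y'−x'·y))`. -/
def hMul {n : ℕ} (η ξ : Heis n) : Heis n :=
  (η.1 + ξ.1, η.2.1 + ξ.2.1,
    η.2.2 + ξ.2.2 + 2 * ∑ i, (η.1 i * ξ.2.1 i - ξ.1 i * η.2.1 i))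

/-- The Heisenberg group inverse `η⁻¹ = −η`. -/
def hInv {n : ℕ} (η : Heis n) : Heis n := (-η.1, -η.2.1, -η.2.2)

/-- The Korányi norm `|(x,y,τ)|_ℍ = ((|x|²+|y|²)² + τ²)^(1/4)`. -/
def kNorm {n : ℕ} (η : Heis n) : ℝ :=
  ((‖η.1‖ ^ 2 + ‖η.2.1‖ ^ 2) ^ 2 + η.2.2 ^ 2) ^ ((1 : ℝ) / 4)

/-- The Korányi distance `d_ℍ(η,ξ) = |ξ⁻¹ ∘ η|_ℍ`. -/
def kDist {n : ℕ} (η ξ : Heis n) : ℝ := kNorm (hMul (hInv ξ) η)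

/-- The left-invariant vector field `X_i = ∂_{x_i} − 2 y_i ∂_τ` (as a vector at `η`). -/
def XV {n : ℕ} (i : Fin n) (η : Heis n) : Heis n :=
  (EuclideanSpace.single i (1 : ℝ), 0, -(2 * η.2.1 i))

/-- The left-invariant vector field `Y_i = ∂_{y_i} + 2 x_i ∂_τ` (as a vector at `η`). -/
def YV {n : ℕ} (i : Fin n) (η : Heis n) : Heis n :=
  (0, EuclideanSpace.single i (1 : ℝ), 2 * η.1 i)

/-- The derivative of `f` along the vector field `V`. -/
def vderiv {n : ℕ} (V : Heis n → Heis n) (f : Heis n → ℝ) (η : Heis n) : ℝ :=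
  fderiv ℝ f η (V η)

/-- The sub-Laplacian (Kohn Laplacian) `Δ_ℍ = Σ (X_i² + Y_i²)`. -/
def heisLap {n : ℕ} (f : Heis n → ℝ) (η : Heis n) : ℝ :=
  ∑ i : Fin n, (vderiv (XV i) (vderiv (XV i) f) η + vderiv (YV i) (vderiv (YV i) f) η)

/-- Partial derivative `∂_{x_i}`. -/
def pdx {n : ℕ} (i : Fin n) (f : Heis n → ℝ) (η : Heis n) : ℝ :=
  fderiv ℝ f η (EuclideanSpace.single i (1 : ℝ), 0, 0)

/-- Partial derivative `∂_{y_i}`. -/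
def pdy {n : ℕ} (i : Fin n) (f : Heis n → ℝ) (η : Heis n) : ℝ :=
  fderiv ℝ f η (0, EuclideanSpace.single i (1 : ℝ), 0)

/-- Partial derivative `∂_τ`. -/
def pdt {n : ℕ} (f : Heis n → ℝ) (η : Heis n) : ℝ :=
  fderiv ℝ f η (0, 0, 1)

/-- The Heisenberg convolution `(K ∗_ℍ |u|^p)(η) = ∫ K(d_ℍ(η,ξ)) |u(ξ)|^p dξ`, in `[0,∞]`. -/
def heisConv {n : ℕ} (K : ℝ → ℝ) (v : Heis n → ℝ) (p : ℝ) (η : Heis n) : ℝ≥0∞ :=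
  ∫⁻ ξ, ENNReal.ofReal (K (kDist η ξ) * |v ξ| ^ p)

/-- The nonlinearity `(K ∗_ℍ |u|^p)(η) |u(t,η)|^q`, valued in `[0,∞]`. -/
def nonlin {n : ℕ} (K : ℝ → ℝ) (p q : ℝ) (u : ℝ → Heis n → ℝ) (t : ℝ) (η : Heis n) : ℝ≥0∞ :=
  heisConv K (u t) p η * ENNReal.ofReal (|u t η| ^ q)

/-- The box `B_T = {(x,y,τ) : |x|² ≤ T, |y|² ≤ T, |τ| ≤ T}`. -/
def BT (n : ℕ) (T : ℝ) : Set (Heis n) :=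
  {η | ‖η.1‖ ^ 2 ≤ T ∧ ‖η.2.1‖ ^ 2 ≤ T ∧ |η.2.2| ≤ T}

/-- The parabolic dilation `δ_λ(x,y,τ) = (λx, λy, λ²τ)`. -/
def dilation (n : ℕ) (lam : ℝ) (η : Heis n) : Heis n :=
  (lam • η.1, lam • η.2.1, lam ^ 2 * η.2.2)

/-- A global weak solution of `u_t − Δ_ℍ u ≥ (K ∗_ℍ |u|^p)|u|^q`, `u(·,0) = u₀`:
`u ∈ L^p_loc((0,∞)×ℍⁿ)`, the nonlinearity is in `L¹_loc((0,∞)×ℍⁿ)`, and the weak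
integral inequality holds against every nonnegative compactly supported `C²` test
function for every time `τ ≥ 0`. -/
structure IsGlobalWeakSolution {n : ℕ} (K : ℝ → ℝ) (p q : ℝ)
    (u₀ : Heis n → ℝ) (u : ℝ → Heis n → ℝ) : Prop where
  measurable : Measurable (Function.uncurry u)
  lp_loc : ∀ S : Set (ℝ × Heis n), IsCompact S → S ⊆ Ioi (0 : ℝ) ×ˢ (univ : Set (Heis n)) →
    ∫⁻ z in S, ENNReal.ofReal (|u z.1 z.2| ^ p) < ∞
  nonlin_loc : ∀ S : Set (ℝ × Heis n), IsCompact S → S ⊆ Ioi (0 : ℝ) ×ˢ (univ : Set (Heis n)) →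
    ∫⁻ z in S, nonlin K p q u z.1 z.2 < ∞
  weak : ∀ ψ : ℝ × Heis n → ℝ, ContDiff ℝ 2 ψ → HasCompactSupport ψ →
    (∀ z, 0 ≤ ψ z) → ∀ τ : ℝ, 0 ≤ τ →
      (∫ t in Ioc (0 : ℝ) τ, ∫ η, (nonlin K p q u t η).toReal * ψ (t, η))
        + (∫ t in Ioc (0 : ℝ) τ, ∫ η, u t η * heisLap (fun ξ => ψ (t, ξ)) η)
        + (∫ t in Ioc (0 : ℝ) τ, ∫ η, u t η * deriv (fun s => ψ (s, η)) t)
      ≤ (∫ η, u τ η * ψ (τ, η)) - ∫ η, u₀ η * ψ (0, η)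


set_option maxHeartbeats 2000000 in
/-- On the box `B_T`, the Heisenberg convolution is bounded below:
`(K ∗_ℍ |u|^p)(η) ≥ K(12√T) ∫_{B_T} |u(ξ)|^p dξ` for every `η ∈ B_T`. -/
theorem heisConv_lower_bound
    (n : ℕ) (hn : 1 ≤ n) (p : ℝ) (hp : 0 < p)
    (K : ℝ → ℝ) (hKcont : ContinuousOn K (Ioi 0)) (hKpos : ∀ r > (0 : ℝ), 0 < K r)
    (R₀ : ℝ) (hR₀ : 1 < R₀) (hKinf : ∀ R > R₀, sInf (K '' Ioo 0 R) = K R)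
    (T : ℝ) (hT : 1 < T) (hTR : R₀ < 12 * Real.sqrt T)
    (u : Heis n → ℝ) (hu : Measurable u) (η : Heis n) (hη : η ∈ BT n T) :
    ENNReal.ofReal (K (12 * Real.sqrt T)) * (∫⁻ ξ in BT n T, ENNReal.ofReal (|u ξ| ^ p))
      ≤ heisConv K u p η := by
  have hT0 : (0:ℝ) < T := lt_trans one_pos hT
  have hsT : 0 < Real.sqrt T := Real.sqrt_pos.mpr hT0
  have hTsq : Real.sqrt T * Real.sqrt T = T := Real.mul_self_sqrt hT0.le
  set R : ℝ := 12 * Real.sqrt T with hRdef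
  have hR0 : (0:ℝ) < R := by positivity
  have hKR : 0 ≤ K R := (hKpos R hR0).le
  -- key pointwise bound: K R ≤ K (kDist η ξ) for ξ ∈ B_T, ξ ≠ η
  have key : ∀ ξ ∈ BT n T, ξ ≠ η → K R ≤ K (kDist η ξ) := by
    intro ξ hξ hne
    set w : Heis n := hMul (hInv ξ) η with hw
    have hw1 : w.1 = η.1 - ξ.1 := by
      simp [hw, hMul, hInv, sub_eq_neg_add]
    have hw2 : w.2.1 = η.2.1 - ξ.2.1 := by
      simp [hw, hMul, hInv, sub_eq_neg_add]
    have hw3 : w.2.2 = η.2.2 - ξ.2.2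
        + 2 * ∑ i, (η.1 i * ξ.2.1 i - ξ.1 i * η.2.1 i) := by
      simp only [hw, hMul, hInv]
      rw [Finset.mul_sum, Finset.mul_sum]
      congr 1
      · ring
      · exact Finset.sum_congr rfl fun i _ => by
          simp only [PiLp.neg_apply]; ring
    have hkd : kDist η ξ = ((‖w.1‖ ^ 2 + ‖w.2.1‖ ^ 2) ^ 2 + w.2.2 ^ 2) ^ ((1:ℝ)/4) := rfl
    clear hw
    clear_value w
    -- positivity of the base
    have hBpos : 0 < (‖w.1‖ ^ 2 + ‖w.2.1‖ ^ 2) ^ 2 + w.2.2 ^ 2 := by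
      rcases lt_or_eq_of_le (by positivity :
          (0:ℝ) ≤ (‖w.1‖ ^ 2 + ‖w.2.1‖ ^ 2) ^ 2 + w.2.2 ^ 2) with h | h
      · exact h
      exfalso
      have hA : (‖w.1‖ ^ 2 + ‖w.2.1‖ ^ 2) ^ 2 = 0 ∧ w.2.2 ^ 2 = 0 := by
        constructor <;> nlinarith [sq_nonneg (‖w.1‖ ^ 2 + ‖w.2.1‖ ^ 2), sq_nonneg w.2.2]
      have hA1 : ‖w.1‖ ^ 2 + ‖w.2.1‖ ^ 2 = 0 := by
        have := hA.1
        nlinarith [sq_nonneg ‖w.1‖, sq_nonneg ‖w.2.1‖]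
      have hx1 : ‖w.1‖ = 0 := by nlinarith [sq_nonneg ‖w.1‖, sq_nonneg ‖w.2.1‖]
      have hy1 : ‖w.2.1‖ = 0 := by nlinarith [sq_nonneg ‖w.1‖, sq_nonneg ‖w.2.1‖]
      have hxe : ξ.1 = η.1 := by
        have := norm_eq_zero.mp hx1
        rw [hw1, sub_eq_zero] at this
        exact this.symm
      have hye : ξ.2.1 = η.2.1 := by
        have := norm_eq_zero.mp hy1
        rw [hw2, sub_eq_zero] at this
        exact this.symm
      have ht0 : w.2.2 = 0 := by
        have := hA.2; nlinarith
      have hte : ξ.2.2 = η.2.2 := by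
        rw [hw3, hxe, hye] at ht0
        simp at ht0
        linarith
      exact hne (Prod.ext hxe (Prod.ext hye hte))
    have hpos : 0 < kDist η ξ := by
      rw [hkd]; exact Real.rpow_pos_of_pos hBpos _
    -- upper bound on the base
    have hxη : ‖η.1‖ ≤ Real.sqrt T := by
      have := Real.sqrt_le_sqrt hη.1
      rwa [Real.sqrt_sq (norm_nonneg _)] at this
    have hyη : ‖η.2.1‖ ≤ Real.sqrt T := by
      have := Real.sqrt_le_sqrt hη.2.1
      rwa [Real.sqrt_sq (norm_nonneg _)] at this
    have hxξ : ‖ξ.1‖ ≤ Real.sqrt T := by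
      have := Real.sqrt_le_sqrt hξ.1
      rwa [Real.sqrt_sq (norm_nonneg _)] at this
    have hyξ : ‖ξ.2.1‖ ≤ Real.sqrt T := by
      have := Real.sqrt_le_sqrt hξ.2.1
      rwa [Real.sqrt_sq (norm_nonneg _)] at this
    have hw1n : ‖w.1‖ ≤ 2 * Real.sqrt T := by
      rw [hw1]; exact (norm_sub_le _ _).trans (by linarith)
    have hw2n : ‖w.2.1‖ ≤ 2 * Real.sqrt T := by
      rw [hw2]; exact (norm_sub_le _ _).trans (by linarith)
    have hcs1 : |∑ i, η.1 i * ξ.2.1 i| ≤ ‖η.1‖ * ‖ξ.2.1‖ := by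
      have := abs_real_inner_le_norm η.1 ξ.2.1
      simpa [PiLp.inner_apply, RCLike.inner_apply, conj_trivial, mul_comm] using this
    have hcs2 : |∑ i, ξ.1 i * η.2.1 i| ≤ ‖ξ.1‖ * ‖η.2.1‖ := by
      have := abs_real_inner_le_norm ξ.1 η.2.1
      simpa [PiLp.inner_apply, RCLike.inner_apply, conj_trivial, mul_comm] using this
    have hsum : |∑ i, (η.1 i * ξ.2.1 i - ξ.1 i * η.2.1 i)| ≤ 2 * T := by
      rw [Finset.sum_sub_distrib]
      calc |(∑ i, η.1 i * ξ.2.1 i) - ∑ i, ξ.1 i * η.2.1 i|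
          ≤ |∑ i, η.1 i * ξ.2.1 i| + |∑ i, ξ.1 i * η.2.1 i| := abs_sub _ _
        _ ≤ ‖η.1‖ * ‖ξ.2.1‖ + ‖ξ.1‖ * ‖η.2.1‖ := add_le_add hcs1 hcs2
        _ ≤ 2 * T := by
            nlinarith [norm_nonneg η.1, norm_nonneg ξ.1, norm_nonneg η.2.1, norm_nonneg ξ.2.1]
    have htw : |w.2.2| ≤ 6 * T := by
      rw [hw3]
      calc |η.2.2 - ξ.2.2 + 2 * ∑ i, (η.1 i * ξ.2.1 i - ξ.1 i * η.2.1 i)|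
          ≤ |η.2.2 - ξ.2.2| + |2 * ∑ i, (η.1 i * ξ.2.1 i - ξ.1 i * η.2.1 i)| := abs_add_le _ _
        _ ≤ (|η.2.2| + |ξ.2.2|) + 2 * |∑ i, (η.1 i * ξ.2.1 i - ξ.1 i * η.2.1 i)| := by
            rw [abs_mul]
            exact add_le_add (abs_sub _ _) (by norm_num)
        _ ≤ 6 * T := by
            have h1 := hη.2.2; have h2 := hξ.2.2
            linarith
    have hBle : (‖w.1‖ ^ 2 + ‖w.2.1‖ ^ 2) ^ 2 + w.2.2 ^ 2 < R ^ 4 := by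
      have hR4 : R ^ 4 = 20736 * T ^ 2 := by
        have h12 : (12 * Real.sqrt T) ^ 4 = 20736 * (Real.sqrt T * Real.sqrt T) ^ 2 := by ring
        rw [hRdef, h12, hTsq]
      rw [hR4]
      have h1 : ‖w.1‖ ^ 2 ≤ 4 * T := by nlinarith [norm_nonneg w.1]
      have h2 : ‖w.2.1‖ ^ 2 ≤ 4 * T := by nlinarith [norm_nonneg w.2.1]
      have h3 : w.2.2 ^ 2 ≤ 36 * T ^ 2 := by nlinarith [abs_nonneg w.2.2, sq_abs w.2.2]
      nlinarith [sq_nonneg (‖w.1‖ ^ 2 + ‖w.2.1‖ ^ 2), sq_nonneg w.2.2]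
    have hlt : kDist η ξ < R := by
      rw [hkd]
      have h4 : (0:ℝ) < (1:ℝ)/4 := by norm_num
      have hmono := Real.rpow_lt_rpow (by positivity :
        (0:ℝ) ≤ (‖w.1‖ ^ 2 + ‖w.2.1‖ ^ 2) ^ 2 + w.2.2 ^ 2) hBle h4
      have hr4 : ((R ^ (4:ℕ)) : ℝ) ^ ((1:ℝ)/4) = R := by
        rw [← Real.rpow_natCast R 4, ← Real.rpow_mul hR0.le]
        norm_num
      rwa [hr4] at hmono
    -- conclude via the infimum hypothesis
    have hbdd : BddBelow (K '' Ioo 0 R) := by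
      refine ⟨0, fun y hy => ?_⟩
      obtain ⟨r, hr, rfl⟩ := hy
      exact (hKpos r hr.1).le
    have hle := csInf_le hbdd (Set.mem_image_of_mem K ⟨hpos, hlt⟩)
    rwa [hKinf R hTR] at hle
  -- measurability of B_T
  have hmeas : MeasurableSet (BT n T) := by
    have hBT : BT n T = {η : Heis n | ‖η.1‖ ^ 2 ≤ T} ∩
        ({η : Heis n | ‖η.2.1‖ ^ 2 ≤ T} ∩ {η : Heis n | |η.2.2| ≤ T}) := rfl
    rw [hBT]
    refine (IsClosed.measurableSet ?_).inter ((IsClosed.measurableSet ?_).inter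
      (IsClosed.measurableSet ?_))
    · exact isClosed_le (by fun_prop) continuous_const
    · exact isClosed_le (by fun_prop) continuous_const
    · exact isClosed_le (continuous_abs.comp (continuous_snd.comp continuous_snd))
        continuous_const
  -- {η} is null
  have hnull : (volume : Measure (Heis n)) {η} = 0 := by
    have h1 : ({η} : Set (Heis n)) = {η.1} ×ˢ ({η.2.1} ×ˢ {η.2.2}) := by
      ext z; simp [Prod.ext_iff, and_assoc]
    rw [Measure.volume_eq_prod, h1, Measure.prod_prod, Measure.volume_eq_prod,
      Measure.prod_prod, measure_singleton (α := ℝ)]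
    simp
  have hae : ∀ᵐ ξ ∂(volume.restrict (BT n T)), ξ ≠ η := by
    rw [ae_iff]
    have h1 : {ξ : Heis n | ¬ ξ ≠ η} = {η} := by ext; simp
    rw [h1]
    exact le_antisymm ((Measure.restrict_apply_le _ _).trans hnull.le) zero_le
  have h1 : ∫⁻ ξ in BT n T, ENNReal.ofReal (K R) * ENNReal.ofReal (|u ξ| ^ p)
      ≤ ∫⁻ ξ in BT n T, ENNReal.ofReal (K (kDist η ξ) * |u ξ| ^ p) := by
    refine lintegral_mono_ae ?_
    filter_upwards [hae, ae_restrict_mem hmeas] with ξ hne hmem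
    rw [← ENNReal.ofReal_mul hKR]
    exact ENNReal.ofReal_le_ofReal
      (mul_le_mul_of_nonneg_right (key ξ hmem hne) (Real.rpow_nonneg (abs_nonneg _) p))
  calc ENNReal.ofReal (K R) * ∫⁻ ξ in BT n T, ENNReal.ofReal (|u ξ| ^ p)
      = ∫⁻ ξ in BT n T, ENNReal.ofReal (K R) * ENNReal.ofReal (|u ξ| ^ p) :=
        (lintegral_const_mul' _ _ ENNReal.ofReal_ne_top).symm
    _ ≤ ∫⁻ ξ in BT n T, ENNReal.ofReal (K (kDist η ξ) * |u ξ| ^ p) := h1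
    _ ≤ ∫⁻ ξ, ENNReal.ofReal (K (kDist η ξ) * |u ξ| ^ p) := setLIntegral_le_lintegral _ _
    _ = heisConv K u p η := rfl
end
end

section
/- Let n ≥ 1, p, q > 0, and let K : (0,∞) → (0,∞) be continuous such that there exists R₀ > 1 with inf_{r∈(0,R)} K(r) = K(R) for all R > R₀. Let T > 1 satisfy 12 T^{1/2} > R₀, set B_T = {(x,y,τ) : |x|² ≤ T, |y|² ≤ T, |τ| ≤ T}, and let ψ : ℍⁿ → [0,1] be measurable with ψ = 0 outside B_T. Then for every measurable u : ℍⁿ → ℝ, ∫_{B_T} (K ∗_ℍ |u|^p)(η) |u(η)|^q ψ(η) dη ≥ K(12 T^{1/2}) (∫_{ℍⁿ} |u(η)|^{(p+q)/2} ψ(η) dη)², with all integrals interpreted in [0,∞]. -/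
open MeasureTheory Filter Real Set
open scoped ENNReal

noncomputable section

-- Auxiliary lemmas -------------------------------------------------------

private lemma heis_measurable_rpow_abs {n : ℕ} {u : Heis n → ℝ} (hu : Measurable u)
    (r : ℝ) (hr : 0 < r) : Measurable fun η => |u η| ^ r := by
  have hc : Continuous fun x : ℝ => x ^ r := Real.continuous_rpow_const hr.le
  exact hc.measurable.comp hu.abs

private lemma BT_measurable (n : ℕ) (T : ℝ) : MeasurableSet (BT n T) := by
  have h1 : IsClosed {η : Heis n | ‖η.1‖ ^ 2 ≤ T} :=
    isClosed_le (by fun_prop) continuous_const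
  have h2 : IsClosed {η : Heis n | ‖η.2.1‖ ^ 2 ≤ T} :=
    isClosed_le (by fun_prop) continuous_const
  have h3 : IsClosed {η : Heis n | |η.2.2| ≤ T} :=
    isClosed_le (by fun_prop) continuous_const
  have : BT n T = {η : Heis n | ‖η.1‖ ^ 2 ≤ T} ∩
      ({η : Heis n | ‖η.2.1‖ ^ 2 ≤ T} ∩ {η : Heis n | |η.2.2| ≤ T}) := by
    ext η; simp [BT, and_assoc]
  rw [this]
  exact (h1.inter (h2.inter h3)).measurableSet

private lemma heis_singleton_null {n : ℕ} (η : Heis n) :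
    (volume : Measure (Heis n)) {η} = 0 := by
  have h2 : (volume : Measure (EuclideanSpace ℝ (Fin n) × ℝ)) {η.2} = 0 := by
    rw [Measure.volume_eq_prod, show ({η.2} : Set (EuclideanSpace ℝ (Fin n) × ℝ))
        = {η.2.1} ×ˢ {η.2.2} by rw [Set.singleton_prod_singleton],
      Measure.prod_prod, measure_singleton (α := ℝ), mul_zero]
  rw [Measure.volume_eq_prod, show ({η} : Set (Heis n)) = {η.1} ×ˢ {η.2} by
      rw [Set.singleton_prod_singleton], Measure.prod_prod, h2, mul_zero]

/-- If `ξ ≠ η` then the Korányi distance is positive. -/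
private lemma kDist_pos {n : ℕ} {η ξ : Heis n} (hne : ξ ≠ η) : 0 < kDist η ξ := by
  unfold kDist kNorm hMul hInv
  set A := (-ξ.1) + η.1 with hA
  set B := (-ξ.2.1) + η.2.1 with hB
  set t := -ξ.2.2 + η.2.2 + 2 * ∑ i, ((-ξ.1) i * η.2.1 i - η.1 i * (-ξ.2.1) i) with ht
  have hX : (0:ℝ) ≤ (‖A‖ ^ 2 + ‖B‖ ^ 2) ^ 2 + t ^ 2 := by positivity
  rcases hX.lt_or_eq with h | h
  · exact Real.rpow_pos_of_pos h _
  · exfalso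
    have h' : (‖A‖ ^ 2 + ‖B‖ ^ 2) ^ 2 + t ^ 2 = 0 := h.symm
    have hs2 : (‖A‖ ^ 2 + ‖B‖ ^ 2) ^ 2 = 0 := by nlinarith [sq_nonneg t]
    have hs : ‖A‖ ^ 2 + ‖B‖ ^ 2 = 0 := by
      exact pow_eq_zero_iff two_ne_zero |>.mp hs2
    have ht2 : t ^ 2 = 0 := by nlinarith
    have htz : t = 0 := pow_eq_zero_iff two_ne_zero |>.mp ht2
    have hA2 : ‖A‖ ^ 2 = 0 := by nlinarith [sq_nonneg ‖A‖, sq_nonneg ‖B‖]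
    have hB2 : ‖B‖ ^ 2 = 0 := by nlinarith [sq_nonneg ‖A‖, sq_nonneg ‖B‖]
    have hA0 : A = 0 := norm_eq_zero.mp (pow_eq_zero_iff two_ne_zero |>.mp hA2)
    have hB0 : B = 0 := norm_eq_zero.mp (pow_eq_zero_iff two_ne_zero |>.mp hB2)
    rw [hA] at hA0
    rw [hB] at hB0
    have hx1 : ξ.1 = η.1 := by rwa [neg_add_eq_zero] at hA0
    have hx2 : ξ.2.1 = η.2.1 := by rwa [neg_add_eq_zero] at hB0
    have hsum : ∑ i, ((-ξ.1) i * η.2.1 i - η.1 i * (-ξ.2.1) i) = 0 := by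
      apply Finset.sum_eq_zero
      intro i _
      have e1 : (-ξ.1) i = -(ξ.1 i) := rfl
      have e2 : (-ξ.2.1) i = -(ξ.2.1 i) := rfl
      rw [e1, e2, hx1, hx2]; ring
    have hx3 : ξ.2.2 = η.2.2 := by
      rw [ht, hsum] at htz
      linarith
    exact hne (Prod.ext hx1 (Prod.ext hx2 hx3))

/-- Bound on the Korányi distance between two points of `B_T`. -/
private lemma kDist_lt {n : ℕ} {T : ℝ} (hT : 1 < T) {η ξ : Heis n}
    (hη : η ∈ BT n T) (hξ : ξ ∈ BT n T) : kDist η ξ < 12 * Real.sqrt T := by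
  have hT0 : (0:ℝ) < T := by linarith
  obtain ⟨hη1, hη2, hη3⟩ := hη
  obtain ⟨hξ1, hξ2, hξ3⟩ := hξ
  have hsT : (0:ℝ) ≤ Real.sqrt T := Real.sqrt_nonneg T
  have hsq : Real.sqrt T ^ 2 = T := Real.sq_sqrt hT0.le
  have hb : ∀ x : EuclideanSpace ℝ (Fin n), ‖x‖ ^ 2 ≤ T → ‖x‖ ≤ Real.sqrt T := by
    intro x hx
    nlinarith [norm_nonneg x]
  have hη1' := hb _ hη1; have hη2' := hb _ hη2
  have hξ1' := hb _ hξ1; have hξ2' := hb _ hξ2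
  unfold kDist kNorm hMul hInv
  set A := (-ξ.1) + η.1 with hA
  set B := (-ξ.2.1) + η.2.1 with hB
  set t := -ξ.2.2 + η.2.2 + 2 * ∑ i, ((-ξ.1) i * η.2.1 i - η.1 i * (-ξ.2.1) i) with ht
  have hAn : ‖A‖ ≤ 2 * Real.sqrt T := by
    calc ‖A‖ ≤ ‖(-ξ.1)‖ + ‖η.1‖ := norm_add_le _ _
    _ = ‖ξ.1‖ + ‖η.1‖ := by rw [norm_neg]
    _ ≤ 2 * Real.sqrt T := by linarith
  have hBn : ‖B‖ ≤ 2 * Real.sqrt T := by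
    calc ‖B‖ ≤ ‖(-ξ.2.1)‖ + ‖η.2.1‖ := norm_add_le _ _
    _ = ‖ξ.2.1‖ + ‖η.2.1‖ := by rw [norm_neg]
    _ ≤ 2 * Real.sqrt T := by linarith
  have hmul : ∀ x y : EuclideanSpace ℝ (Fin n),
      ‖x‖ ≤ Real.sqrt T → ‖y‖ ≤ Real.sqrt T → ‖x‖ * ‖y‖ ≤ T := by
    intro x y hx hy
    calc ‖x‖ * ‖y‖ ≤ Real.sqrt T * Real.sqrt T :=
      mul_le_mul hx hy (norm_nonneg _) hsT
    _ = T := Real.mul_self_sqrt hT0.le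
  have hsum : |∑ i, ((-ξ.1) i * η.2.1 i - η.1 i * (-ξ.2.1) i)| ≤ 2 * T := by
    have heq : ∑ i, ((-ξ.1) i * η.2.1 i - η.1 i * (-ξ.2.1) i)
        = (inner ℝ η.1 ξ.2.1 : ℝ) - (inner ℝ ξ.1 η.2.1 : ℝ) := by
      rw [PiLp.inner_apply, PiLp.inner_apply, ← Finset.sum_sub_distrib]
      apply Finset.sum_congr rfl
      intro i _
      have e1 : (-ξ.1) i = -(ξ.1 i) := rfl
      have e2 : (-ξ.2.1) i = -(ξ.2.1 i) := rfl
      simp only [e1, e2, RCLike.inner_apply, conj_trivial]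
      ring
    rw [heq]
    have h1 : |(inner ℝ η.1 ξ.2.1 : ℝ)| ≤ ‖η.1‖ * ‖ξ.2.1‖ := abs_real_inner_le_norm _ _
    have h2 : |(inner ℝ ξ.1 η.2.1 : ℝ)| ≤ ‖ξ.1‖ * ‖η.2.1‖ := abs_real_inner_le_norm _ _
    have h3 : ‖η.1‖ * ‖ξ.2.1‖ ≤ T := hmul _ _ hη1' hξ2'
    have h4 : ‖ξ.1‖ * ‖η.2.1‖ ≤ T := hmul _ _ hξ1' hη2'
    calc |(inner ℝ η.1 ξ.2.1 : ℝ) - (inner ℝ ξ.1 η.2.1 : ℝ)|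
        ≤ |(inner ℝ η.1 ξ.2.1 : ℝ)| + |(inner ℝ ξ.1 η.2.1 : ℝ)| := abs_sub _ _
    _ ≤ 2 * T := by linarith
  have htb : |t| ≤ 6 * T := by
    rw [ht]
    have h1 := abs_le.1 hsum
    have h2 := abs_le.1 hη3
    have h3 := abs_le.1 hξ3
    rw [abs_le]
    constructor <;> linarith
  have hXle : (‖A‖ ^ 2 + ‖B‖ ^ 2) ^ 2 + t ^ 2 < (12 * Real.sqrt T) ^ 4 := by
    have h4 : (12 * Real.sqrt T) ^ 4 = 20736 * T ^ 2 := by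
      have e : (12 * Real.sqrt T) ^ 4 = 20736 * (Real.sqrt T ^ 2) ^ 2 := by ring
      rw [e, hsq]
    rw [h4]
    have htb' := abs_le.1 htb
    have ht2 : t ^ 2 ≤ (6 * T) ^ 2 := sq_le_sq' (htb'.1) (htb'.2)
    have hA2 : ‖A‖ ^ 2 ≤ (2 * Real.sqrt T) ^ 2 := pow_le_pow_left₀ (norm_nonneg A) hAn 2
    have hB2 : ‖B‖ ^ 2 ≤ (2 * Real.sqrt T) ^ 2 := pow_le_pow_left₀ (norm_nonneg B) hBn 2
    have he2 : (2 * Real.sqrt T) ^ 2 = 4 * T := by rw [mul_pow, hsq]; norm_num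
    rw [he2] at hA2 hB2
    have hs8 : ‖A‖ ^ 2 + ‖B‖ ^ 2 ≤ 8 * T := by linarith
    have hs0 : (0:ℝ) ≤ ‖A‖ ^ 2 + ‖B‖ ^ 2 := by positivity
    have h64 : (‖A‖ ^ 2 + ‖B‖ ^ 2) ^ 2 ≤ (8 * T) ^ 2 := pow_le_pow_left₀ hs0 hs8 2
    have hTT : (0:ℝ) < T ^ 2 := by positivity
    have he3 : (8 * T) ^ 2 = 64 * T ^ 2 := by ring
    have he4 : (6 * T) ^ 2 = 36 * T ^ 2 := by ring
    linarith
  have hc : (0:ℝ) < 12 * Real.sqrt T := by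
    have : (0:ℝ) < Real.sqrt T := Real.sqrt_pos.2 hT0
    linarith
  have hX0 : (0:ℝ) ≤ (‖A‖ ^ 2 + ‖B‖ ^ 2) ^ 2 + t ^ 2 := by positivity
  calc ((‖A‖ ^ 2 + ‖B‖ ^ 2) ^ 2 + t ^ 2) ^ ((1:ℝ)/4)
      < ((12 * Real.sqrt T) ^ 4) ^ ((1:ℝ)/4) := by
        apply Real.rpow_lt_rpow hX0 hXle
        norm_num
  _ = 12 * Real.sqrt T := by
        rw [← Real.rpow_natCast (12 * Real.sqrt T) 4, ← Real.rpow_mul hc.le]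
        norm_num

private lemma half_half {a b : ℝ} {p q : ℝ} (ha : 0 ≤ a) (hb : 0 ≤ b)
    (hpq : p + q ≠ 0) :
    (a ^ p * b) ^ ((1:ℝ)/2) * (a ^ q * b) ^ ((1:ℝ)/2) = a ^ ((p + q)/2) * b := by
  rw [Real.mul_rpow (Real.rpow_nonneg ha p) hb, Real.mul_rpow (Real.rpow_nonneg ha q) hb,
    ← Real.rpow_mul ha, ← Real.rpow_mul ha]
  have h1 : a ^ (p * (1/2:ℝ)) * a ^ (q * (1/2:ℝ)) = a ^ ((p+q)/2) := by
    rw [← Real.rpow_add' ha (by simpa using fun h => hpq (by linarith))]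
    ring_nf
  have h2 : b ^ ((1:ℝ)/2) * b ^ ((1:ℝ)/2) = b := by
    rw [← Real.rpow_add' hb (by norm_num)]
    norm_num
  calc a ^ (p * (1/2:ℝ)) * b ^ ((1:ℝ)/2) * (a ^ (q * (1/2:ℝ)) * b ^ ((1:ℝ)/2))
      = (a ^ (p * (1/2:ℝ)) * a ^ (q * (1/2:ℝ))) * (b ^ ((1:ℝ)/2) * b ^ ((1:ℝ)/2)) := by ring
  _ = a ^ ((p+q)/2) * b := by rw [h1, h2]

/-- Lower bound for the weighted nonlinear term (inequality (13) in the proof):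
`∫_{B_T} (K ∗_ℍ |u|^p)(η) |u(η)|^q ψ(η) dη ≥ K(12√T) (∫ |u|^((p+q)/2) ψ)²`. -/
theorem weighted_nonlinearity_lower_bound
    (n : ℕ) (hn : 1 ≤ n) (p q : ℝ) (hp : 0 < p) (hq : 0 < q)
    (K : ℝ → ℝ) (hKcont : ContinuousOn K (Ioi 0)) (hKpos : ∀ r > (0 : ℝ), 0 < K r)
    (R₀ : ℝ) (hR₀ : 1 < R₀) (hKinf : ∀ R > R₀, sInf (K '' Ioo 0 R) = K R)
    (T : ℝ) (hT : 1 < T) (hTR : R₀ < 12 * Real.sqrt T)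
    (ψ : Heis n → ℝ) (hψmeas : Measurable ψ) (hψ01 : ∀ η, ψ η ∈ Icc (0 : ℝ) 1)
    (hψsupp : ∀ η ∉ BT n T, ψ η = 0)
    (u : Heis n → ℝ) (hu : Measurable u) :
    ENNReal.ofReal (K (12 * Real.sqrt T)) *
        (∫⁻ η, ENNReal.ofReal (|u η| ^ ((p + q) / 2) * ψ η)) ^ 2
      ≤ ∫⁻ η in BT n T, heisConv K u p η * ENNReal.ofReal (|u η| ^ q * ψ η) := by
  classical
  have hT0 : (0:ℝ) < T := by linarith
  have hsT : (0:ℝ) < Real.sqrt T := Real.sqrt_pos.2 hT0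
  set c := 12 * Real.sqrt T with hcdef
  have hc : (0:ℝ) < c := by rw [hcdef]; linarith
  have hKc : 0 < K c := hKpos c hc
  have hKlow : ∀ r, 0 < r → r < c → K c ≤ K r := by
    intro r hr0 hrc
    have hinf := hKinf c hTR
    have hbdd : BddBelow (K '' Ioo 0 c) := by
      by_contra hb
      rw [Real.sInf_of_not_bddBelow hb] at hinf
      exact absurd hinf.symm (ne_of_gt hKc)
    have hle : sInf (K '' Ioo 0 c) ≤ K r := csInf_le hbdd ⟨r, ⟨hr0, hrc⟩, rfl⟩
    rwa [hinf] at hle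
  have hBT := BT_measurable n T
  have hψ0 : ∀ η, 0 ≤ ψ η := fun η => (hψ01 η).1
  have hψ1 : ∀ η, ψ η ≤ 1 := fun η => (hψ01 η).2
  have hfq : Measurable fun η : Heis n => ENNReal.ofReal (|u η| ^ q * ψ η) :=
    ((heis_measurable_rpow_abs hu q hq).mul hψmeas).ennreal_ofReal
  have hfp : Measurable fun ξ : Heis n => ENNReal.ofReal (|u ξ| ^ p) :=
    (heis_measurable_rpow_abs hu p hp).ennreal_ofReal
  have hfpψ : Measurable fun η : Heis n => ENNReal.ofReal (|u η| ^ p * ψ η) :=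
    ((heis_measurable_rpow_abs hu p hp).mul hψmeas).ennreal_ofReal
  set A := ∫⁻ ξ in BT n T, ENNReal.ofReal (|u ξ| ^ p) with hAdef
  set B := ∫⁻ η in BT n T, ENNReal.ofReal (|u η| ^ q * ψ η) with hBdef
  -- Step 1 : lower bound for the right-hand side
  have step1 : ENNReal.ofReal (K c) * A * B
      ≤ ∫⁻ η in BT n T, heisConv K u p η * ENNReal.ofReal (|u η| ^ q * ψ η) := by
    have hconv : ∀ η ∈ BT n T, ENNReal.ofReal (K c) * A ≤ heisConv K u p η := by
      intro η hη
      have h1 : (∫⁻ ξ in BT n T, ENNReal.ofReal (K c * |u ξ| ^ p))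
          ≤ ∫⁻ ξ in BT n T, ENNReal.ofReal (K (kDist η ξ) * |u ξ| ^ p) := by
        apply lintegral_mono_ae
        have hne : ∀ᵐ ξ : Heis n, ξ ≠ η := by
          rw [ae_iff]
          have hset : {ξ : Heis n | ¬ ξ ≠ η} = {η} := by ext ξ; simp
          rw [hset]
          exact heis_singleton_null η
        have hne' : ∀ᵐ ξ ∂(volume.restrict (BT n T)), ξ ≠ η := ae_restrict_of_ae hne
        filter_upwards [hne', ae_restrict_mem hBT] with ξ hξne hξBT
        apply ENNReal.ofReal_le_ofReal
        apply mul_le_mul_of_nonneg_right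
        · exact hKlow _ (kDist_pos hξne) (kDist_lt hT hη hξBT)
        · positivity
      calc ENNReal.ofReal (K c) * A
          = ∫⁻ ξ in BT n T, ENNReal.ofReal (K c * |u ξ| ^ p) := by
            rw [hAdef, ← lintegral_const_mul _ hfp]
            exact (lintegral_congr fun ξ => ENNReal.ofReal_mul (le_of_lt hKc)).symm
      _ ≤ ∫⁻ ξ in BT n T, ENNReal.ofReal (K (kDist η ξ) * |u ξ| ^ p) := h1
      _ ≤ heisConv K u p η := setLIntegral_le_lintegral _ _
    calc ENNReal.ofReal (K c) * A * B
        = ∫⁻ η in BT n T,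
            (ENNReal.ofReal (K c) * A) * ENNReal.ofReal (|u η| ^ q * ψ η) := by
          rw [hBdef, ← lintegral_const_mul _ hfq]
    _ ≤ ∫⁻ η in BT n T, heisConv K u p η * ENNReal.ofReal (|u η| ^ q * ψ η) := by
          apply lintegral_mono_ae
          filter_upwards [ae_restrict_mem hBT] with η hη
          exact mul_le_mul_left (hconv η hη) _
  -- Step 2 : Cauchy–Schwarz
  have hpq0 : p + q ≠ 0 := by positivity
  have hFm : Measurable fun η : Heis n =>
      (ENNReal.ofReal (|u η| ^ p * ψ η)) ^ ((1:ℝ)/2) :=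
    ENNReal.continuous_rpow_const.measurable.comp hfpψ
  have hGm : Measurable fun η : Heis n =>
      (ENNReal.ofReal (|u η| ^ q * ψ η)) ^ ((1:ℝ)/2) :=
    ENNReal.continuous_rpow_const.measurable.comp hfq
  have hpt : ∀ η : Heis n, ENNReal.ofReal (|u η| ^ ((p+q)/2) * ψ η)
      = (ENNReal.ofReal (|u η| ^ p * ψ η)) ^ ((1:ℝ)/2)
        * (ENNReal.ofReal (|u η| ^ q * ψ η)) ^ ((1:ℝ)/2) := by
    intro η
    have h0p : (0:ℝ) ≤ |u η| ^ p * ψ η := mul_nonneg (by positivity) (hψ0 η)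
    have h0q : (0:ℝ) ≤ |u η| ^ q * ψ η := mul_nonneg (by positivity) (hψ0 η)
    rw [ENNReal.ofReal_rpow_of_nonneg h0p (by norm_num),
        ENNReal.ofReal_rpow_of_nonneg h0q (by norm_num),
        ← ENNReal.ofReal_mul (Real.rpow_nonneg h0p _),
        half_half (abs_nonneg _) (hψ0 η) hpq0]
  have h2 : Real.HolderConjugate 2 2 := Real.HolderConjugate.two_two
  have hCS := ENNReal.lintegral_mul_le_Lp_mul_Lq volume h2 hFm.aemeasurable hGm.aemeasurable
  have erw2 : ∀ x : ℝ≥0∞, (x ^ ((1:ℝ)/2)) ^ (2:ℝ) = x := by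
    intro x
    rw [← ENNReal.rpow_mul]
    norm_num
  simp only [Pi.mul_apply, erw2] at hCS
  have hCS' : (∫⁻ η, ENNReal.ofReal (|u η| ^ ((p + q) / 2) * ψ η))
      ≤ (∫⁻ η, ENNReal.ofReal (|u η| ^ p * ψ η)) ^ ((1:ℝ)/2)
        * (∫⁻ η, ENNReal.ofReal (|u η| ^ q * ψ η)) ^ ((1:ℝ)/2) := by
    calc (∫⁻ η, ENNReal.ofReal (|u η| ^ ((p + q) / 2) * ψ η))
        = ∫⁻ η, (ENNReal.ofReal (|u η| ^ p * ψ η)) ^ ((1:ℝ)/2)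
            * (ENNReal.ofReal (|u η| ^ q * ψ η)) ^ ((1:ℝ)/2) :=
          lintegral_congr fun η => hpt η
    _ ≤ _ := hCS
  -- vanishing outside BT
  have hvanish : ∀ F : Heis n → ℝ≥0∞, (∀ x ∉ BT n T, F x = 0) →
      (∫⁻ x, F x) = ∫⁻ x in BT n T, F x := by
    intro F hF
    rw [← lintegral_indicator hBT]
    refine lintegral_congr fun x => ?_
    by_cases hx : x ∈ BT n T
    · rw [Set.indicator_of_mem hx]
    · rw [Set.indicator_of_notMem hx, hF x hx]
  have hfA : (∫⁻ η, ENNReal.ofReal (|u η| ^ p * ψ η)) ≤ A := by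
    rw [hvanish _ (fun x hx => by rw [hψsupp x hx, mul_zero, ENNReal.ofReal_zero]), hAdef]
    apply lintegral_mono
    intro η
    apply ENNReal.ofReal_le_ofReal
    exact mul_le_of_le_one_right (by positivity) (hψ1 η)
  have hgB : (∫⁻ η, ENNReal.ofReal (|u η| ^ q * ψ η)) = B :=
    hvanish _ (fun x hx => by rw [hψsupp x hx, mul_zero, ENNReal.ofReal_zero])
  have hsq : (∫⁻ η, ENNReal.ofReal (|u η| ^ ((p + q) / 2) * ψ η)) ^ 2 ≤ A * B := by
    calc (∫⁻ η, ENNReal.ofReal (|u η| ^ ((p + q) / 2) * ψ η)) ^ 2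
        ≤ ((∫⁻ η, ENNReal.ofReal (|u η| ^ p * ψ η)) ^ ((1:ℝ)/2)
            * (∫⁻ η, ENNReal.ofReal (|u η| ^ q * ψ η)) ^ ((1:ℝ)/2)) ^ 2 := by
          exact pow_le_pow_left' hCS' 2
    _ = (∫⁻ η, ENNReal.ofReal (|u η| ^ p * ψ η))
          * (∫⁻ η, ENNReal.ofReal (|u η| ^ q * ψ η)) := by
          rw [mul_pow, ← ENNReal.rpow_natCast (_ ^ ((1:ℝ)/2)) 2,
            ← ENNReal.rpow_natCast ((∫⁻ η, ENNReal.ofReal (|u η| ^ q * ψ η)) ^ ((1:ℝ)/2)) 2,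
            ← ENNReal.rpow_mul, ← ENNReal.rpow_mul]
          norm_num
    _ ≤ A * B := mul_le_mul' hfA (le_of_eq hgB)
  calc ENNReal.ofReal (K c) * (∫⁻ η, ENNReal.ofReal (|u η| ^ ((p + q) / 2) * ψ η)) ^ 2
      ≤ ENNReal.ofReal (K c) * (A * B) := mul_le_mul_right hsq _
  _ = ENNReal.ofReal (K c) * A * B := by rw [mul_assoc]
  _ ≤ _ := step1
end
end
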